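/- Let J, R, E ∈ ℂ^{n×n} with J skew-Hermitian, R Hermitian positive semidefinite, and E Hermitian positive semidefinite. Then the unstructured distance to a common null space of J, R, and E, namely the infimum of √(‖Δ_J‖² + ‖Δ_R‖² + ‖Δ_E‖²) over all triples (Δ_J, Δ_R, Δ_E) ∈ (ℂ^{n×n})³ for which there exists a nonzero x ∈ ℂⁿ with (J + Δ_J)x = 0, (R + Δ_R)x = 0, and (E + Δ_E)x = 0, equals √(λ_min(−J² + R² + E²)). -/

import Mathlib

open Matrix
open scoped ComplexOrder

/-- The spectral norm (ℓ² operator norm) of a complex matrix. -/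
noncomputable def specNorm {k : Type*} [Fintype k] [DecidableEq k]
    (X : Matrix k k ℂ) : ℝ :=
  ‖Matrix.toEuclideanCLM (𝕜 := ℂ) X‖

/-- The smallest eigenvalue of a Hermitian matrix (junk value `0` otherwise). -/
noncomputable def lamMin {k : Type*} [Fintype k] [DecidableEq k]
    (H : Matrix k k ℂ) : ℝ :=
  if h : H.IsHermitian then ⨅ i, h.eigenvalues i else 0

namespace JREaux

variable {n : ℕ}

lemma _root_.WithLp.equiv_symm_smul {p : ENNReal} {K V : Type*} [SMul K V] (c : K) (v : V) :
    (WithLp.equiv p V).symm (c • v) = c • (WithLp.equiv p V).symm v := rfl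

lemma aux_clm (A : Matrix (Fin n) (Fin n) ℂ) (x : Fin n → ℂ) :
    Matrix.toEuclideanCLM (𝕜 := ℂ) A ((WithLp.equiv 2 (Fin n → ℂ)).symm x)
      = (WithLp.equiv 2 (Fin n → ℂ)).symm (A *ᵥ x) := by
  simp [Matrix.toLin'_apply]

lemma aux_mulVec_norm_le (A : Matrix (Fin n) (Fin n) ℂ) (x : Fin n → ℂ) :
    ‖(WithLp.equiv 2 (Fin n → ℂ)).symm (A *ᵥ x)‖ ≤
      specNorm A * ‖(WithLp.equiv 2 (Fin n → ℂ)).symm x‖ := by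
  rw [← aux_clm]
  exact (Matrix.toEuclideanCLM (𝕜 := ℂ) A).le_opNorm _

lemma aux_vecMulVec_mulVec (u w z : Fin n → ℂ) :
    vecMulVec u w *ᵥ z = (w ⬝ᵥ z) • u := by
  funext i
  simp [vecMulVec_apply, mulVec, dotProduct, Finset.mul_sum, mul_assoc, mul_comm, mul_left_comm]

lemma aux_norm_sq (y : Fin n → ℂ) :
    star y ⬝ᵥ y = ((‖(WithLp.equiv 2 (Fin n → ℂ)).symm y‖ : ℝ) : ℂ) ^ 2 := by
  rw [dotProduct_comm, ← EuclideanSpace.inner_toLp_toLp]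
  exact inner_self_eq_norm_sq_to_K _

lemma aux_rayleigh_term (A : Matrix (Fin n) (Fin n) ℂ) (x : Fin n → ℂ) :
    star x ⬝ᵥ ((Aᴴ * A) *ᵥ x)
      = ((‖(WithLp.equiv 2 (Fin n → ℂ)).symm (A *ᵥ x)‖ : ℝ) : ℂ) ^ 2 := by
  rw [← mulVec_mulVec, dotProduct_mulVec, ← star_mulVec, aux_norm_sq]

lemma aux_rank_one_le (u x : Fin n → ℂ) :
    specNorm (vecMulVec u (star x)) ≤
      ‖(WithLp.equiv 2 (Fin n → ℂ)).symm u‖ * ‖(WithLp.equiv 2 (Fin n → ℂ)).symm x‖ := by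
  apply ContinuousLinearMap.opNorm_le_bound _
    (mul_nonneg (norm_nonneg _) (norm_nonneg _))
  intro y
  have hy : y = (WithLp.equiv 2 (Fin n → ℂ)).symm ((WithLp.equiv 2 (Fin n → ℂ)) y) := rfl
  rw [hy, aux_clm, aux_vecMulVec_mulVec, WithLp.equiv_symm_smul]
  rw [norm_smul]
  have hinner : star x ⬝ᵥ ((WithLp.equiv 2 (Fin n → ℂ)) y)
      = inner ℂ ((WithLp.equiv 2 (Fin n → ℂ)).symm x) y := by
    rw [dotProduct_comm]; rfl
  rw [hinner]
  calc ‖(inner ℂ ((WithLp.equiv 2 (Fin n → ℂ)).symm x) y : ℂ)‖ *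
        ‖(WithLp.equiv 2 (Fin n → ℂ)).symm u‖
      ≤ (‖(WithLp.equiv 2 (Fin n → ℂ)).symm x‖ * ‖y‖) *
        ‖(WithLp.equiv 2 (Fin n → ℂ)).symm u‖ := by
        gcongr; exact norm_inner_le_norm _ _
    _ = ‖(WithLp.equiv 2 (Fin n → ℂ)).symm u‖ *
        ‖(WithLp.equiv 2 (Fin n → ℂ)).symm x‖ * ‖y‖ := by ring

lemma aux_specNorm_neg (M : Matrix (Fin n) (Fin n) ℂ) : specNorm (-M) = specNorm M := by
  unfold specNorm; rw [map_neg, norm_neg]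

lemma aux_specNorm_nonneg (M : Matrix (Fin n) (Fin n) ℂ) : 0 ≤ specNorm M :=
  norm_nonneg _

lemma aux_lamMin_le {H : Matrix (Fin n) (Fin n) ℂ} (hH : H.IsHermitian) (i : Fin n) :
    lamMin H ≤ hH.eigenvalues i := by
  rw [lamMin, dif_pos hH]
  exact ciInf_le (Finite.bddBelow_range _) i

lemma aux_psd (H : Matrix (Fin n) (Fin n) ℂ) (hH : H.IsHermitian) :
    (H - ((lamMin H : ℂ)) • 1).PosSemidef := by
  have hU := (Matrix.mem_unitaryGroup_iff).mp (hH.eigenvectorUnitary).2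
  set L := lamMin H with hL
  have hd : diagonal (fun i => ((hH.eigenvalues i - L : ℝ) : ℂ))
      = diagonal (RCLike.ofReal ∘ hH.eigenvalues) - (L : ℂ) • 1 := by
    rw [Matrix.smul_one_eq_diagonal, diagonal_sub]
    funext i; simp [Function.comp, Complex.ofReal_sub]
  have key : H - ((L : ℂ)) • 1
      = (hH.eigenvectorUnitary : Matrix (Fin n) (Fin n) ℂ)
        * (diagonal (RCLike.ofReal ∘ hH.eigenvalues) - (L : ℂ) • 1)
        * (star (hH.eigenvectorUnitary : Matrix (Fin n) (Fin n) ℂ)) := by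
    rw [Matrix.mul_sub, Matrix.sub_mul, ← Unitary.conjStarAlgAut_apply (S := ℂ), ← hH.spectral_theorem]
    congr 1
    rw [Matrix.mul_smul, Matrix.smul_mul, mul_one, hU]
  rw [key, ← hd]
  have hdiag : (diagonal (fun i => ((hH.eigenvalues i - L : ℝ) : ℂ))).PosSemidef := by
    refine posSemidef_diagonal_iff.mpr fun i => ?_
    rw [Complex.zero_le_real]
    exact sub_nonneg.mpr (aux_lamMin_le hH i)
  exact hdiag.mul_mul_conjTranspose_same _

lemma aux_rayleigh_lb {H : Matrix (Fin n) (Fin n) ℂ} (hH : H.IsHermitian)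
    (x : Fin n → ℂ) :
    lamMin H * ‖(WithLp.equiv 2 (Fin n → ℂ)).symm x‖ ^ 2 ≤ (star x ⬝ᵥ H *ᵥ x).re := by
  have hp := (aux_psd H hH).dotProduct_mulVec_nonneg x
  rw [sub_mulVec, smul_mulVec, one_mulVec, dotProduct_sub, dotProduct_smul,
    smul_eq_mul, aux_norm_sq, Complex.nonneg_iff] at hp
  have := hp.1
  rw [Complex.sub_re, ← Complex.ofReal_pow, ← Complex.ofReal_mul, Complex.ofReal_re] at this
  linarith

lemma aux_lamMin_attained {H : Matrix (Fin n) (Fin n) ℂ} (hn : n ≠ 0)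
    (hH : H.IsHermitian) : ∃ i₀, lamMin H = hH.eigenvalues i₀ := by
  have : Nonempty (Fin n) := ⟨⟨0, Nat.pos_of_ne_zero hn⟩⟩
  obtain ⟨i₀, hi₀⟩ := Finite.exists_min hH.eigenvalues
  exact ⟨i₀, le_antisymm (aux_lamMin_le hH i₀)
    (by rw [lamMin, dif_pos hH]; exact le_ciInf hi₀)⟩

end JREaux

open JREaux

/-- Unstructured distance to a common null space of `J`, `R`, `E`:
`δ₀(J,R,E) = √(λ_min(−J² + R² + E²))`. -/
theorem unstructured_distance_common_null_JRE
    {n : ℕ} (J R E : Matrix (Fin n) (Fin n) ℂ)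
    (hJ : Jᴴ = -J) (hR : R.PosSemidef) (hE : E.PosSemidef) :
    sInf {r : ℝ | ∃ (DJ DR DE : Matrix (Fin n) (Fin n) ℂ) (x : Fin n → ℂ),
        x ≠ 0 ∧ (J + DJ).mulVec x = 0 ∧ (R + DR).mulVec x = 0 ∧
        (E + DE).mulVec x = 0 ∧
        r = Real.sqrt (specNorm DJ ^ 2 + specNorm DR ^ 2 + specNorm DE ^ 2)} =
      Real.sqrt (lamMin (-(J * J) + R * R + E * E)) := by
  classical
  set S := {r : ℝ | ∃ (DJ DR DE : Matrix (Fin n) (Fin n) ℂ) (x : Fin n → ℂ),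
        x ≠ 0 ∧ (J + DJ).mulVec x = 0 ∧ (R + DR).mulVec x = 0 ∧
        (E + DE).mulVec x = 0 ∧
        r = Real.sqrt (specNorm DJ ^ 2 + specNorm DR ^ 2 + specNorm DE ^ 2)} with hS
  have hHsum : -(J * J) + R * R + E * E = Jᴴ * J + Rᴴ * R + Eᴴ * E := by
    rw [hJ, hR.1, hE.1, neg_mul]
  have hH : (-(J * J) + R * R + E * E).IsHermitian := by
    rw [hHsum]
    exact (((Matrix.posSemidef_conjTranspose_mul_self J).1).add
      ((Matrix.posSemidef_conjTranspose_mul_self R).1)).add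
      ((Matrix.posSemidef_conjTranspose_mul_self E).1)
  set L := lamMin (-(J * J) + R * R + E * E) with hLdef
  -- Rayleigh identity
  have hray : ∀ x : Fin n → ℂ, (star x ⬝ᵥ (-(J * J) + R * R + E * E) *ᵥ x).re
      = ‖(WithLp.equiv 2 (Fin n → ℂ)).symm (J *ᵥ x)‖ ^ 2
        + ‖(WithLp.equiv 2 (Fin n → ℂ)).symm (R *ᵥ x)‖ ^ 2
        + ‖(WithLp.equiv 2 (Fin n → ℂ)).symm (E *ᵥ x)‖ ^ 2 := by
    intro x
    rw [hHsum, add_mulVec, add_mulVec, dotProduct_add, dotProduct_add,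
      aux_rayleigh_term, aux_rayleigh_term, aux_rayleigh_term]
    simp [← Complex.ofReal_pow]
  -- lower bound
  have hlb : ∀ r ∈ S, Real.sqrt L ≤ r := by
    rintro r ⟨DJ, DR, DE, x, hx0, h1, h2, h3, hr⟩
    have hxs : (WithLp.equiv 2 (Fin n → ℂ)).symm x ≠ 0 := by
      intro h
      exact hx0 (by simpa using congrArg (WithLp.equiv 2 (Fin n → ℂ)) h)
    set N := ‖(WithLp.equiv 2 (Fin n → ℂ)).symm x‖ with hN
    have hNpos : 0 < N := norm_pos_iff.mpr hxs
    have hJx : J *ᵥ x = -(DJ *ᵥ x) := by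
      rw [add_mulVec] at h1; exact eq_neg_of_add_eq_zero_left h1
    have hRx : R *ᵥ x = -(DR *ᵥ x) := by
      rw [add_mulVec] at h2; exact eq_neg_of_add_eq_zero_left h2
    have hEx : E *ᵥ x = -(DE *ᵥ x) := by
      rw [add_mulVec] at h3; exact eq_neg_of_add_eq_zero_left h3
    have hbJ : ‖(WithLp.equiv 2 (Fin n → ℂ)).symm (J *ᵥ x)‖ ≤ specNorm DJ * N := by
      rw [hJx]
      calc ‖(WithLp.equiv 2 (Fin n → ℂ)).symm (-(DJ *ᵥ x))‖
          = ‖(WithLp.equiv 2 (Fin n → ℂ)).symm (DJ *ᵥ x)‖ := by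
            rw [show (-(DJ *ᵥ x)) = (-1 : ℂ) • (DJ *ᵥ x) by simp,
              WithLp.equiv_symm_smul, norm_smul]; simp
        _ ≤ specNorm DJ * N := aux_mulVec_norm_le DJ x
    have hbR : ‖(WithLp.equiv 2 (Fin n → ℂ)).symm (R *ᵥ x)‖ ≤ specNorm DR * N := by
      rw [hRx]
      calc ‖(WithLp.equiv 2 (Fin n → ℂ)).symm (-(DR *ᵥ x))‖
          = ‖(WithLp.equiv 2 (Fin n → ℂ)).symm (DR *ᵥ x)‖ := by
            rw [show (-(DR *ᵥ x)) = (-1 : ℂ) • (DR *ᵥ x) by simp,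
              WithLp.equiv_symm_smul, norm_smul]; simp
        _ ≤ specNorm DR * N := aux_mulVec_norm_le DR x
    have hbE : ‖(WithLp.equiv 2 (Fin n → ℂ)).symm (E *ᵥ x)‖ ≤ specNorm DE * N := by
      rw [hEx]
      calc ‖(WithLp.equiv 2 (Fin n → ℂ)).symm (-(DE *ᵥ x))‖
          = ‖(WithLp.equiv 2 (Fin n → ℂ)).symm (DE *ᵥ x)‖ := by
            rw [show (-(DE *ᵥ x)) = (-1 : ℂ) • (DE *ᵥ x) by simp,
              WithLp.equiv_symm_smul, norm_smul]; simp
        _ ≤ specNorm DE * N := aux_mulVec_norm_le DE x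
    have hL1 : L * N ^ 2 ≤ (star x ⬝ᵥ (-(J * J) + R * R + E * E) *ᵥ x).re :=
      aux_rayleigh_lb hH x
    have hkey : L ≤ specNorm DJ ^ 2 + specNorm DR ^ 2 + specNorm DE ^ 2 := by
      rw [hray x] at hL1
      have h2J : ‖(WithLp.equiv 2 (Fin n → ℂ)).symm (J *ᵥ x)‖ ^ 2
          ≤ specNorm DJ ^ 2 * N ^ 2 := by
        rw [← mul_pow]; exact pow_le_pow_left₀ (norm_nonneg _) hbJ 2
      have h2R : ‖(WithLp.equiv 2 (Fin n → ℂ)).symm (R *ᵥ x)‖ ^ 2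
          ≤ specNorm DR ^ 2 * N ^ 2 := by
        rw [← mul_pow]; exact pow_le_pow_left₀ (norm_nonneg _) hbR 2
      have h2E : ‖(WithLp.equiv 2 (Fin n → ℂ)).symm (E *ᵥ x)‖ ^ 2
          ≤ specNorm DE ^ 2 * N ^ 2 := by
        rw [← mul_pow]; exact pow_le_pow_left₀ (norm_nonneg _) hbE 2
      have hN2 : 0 < N ^ 2 := pow_pos hNpos 2
      nlinarith
    rw [hr]
    exact Real.sqrt_le_sqrt hkey
  rcases eq_or_ne n 0 with hn | hn
  · -- n = 0 : both sides are 0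
    subst hn
    have hSempty : S = ∅ := by
      ext r
      simp only [hS, Set.mem_setOf_eq, Set.mem_empty_iff_false, iff_false]
      rintro ⟨DJ, DR, DE, x, hx0, -⟩
      exact hx0 (Subsingleton.elim x 0)
    rw [hSempty, Real.sInf_empty]
    have : L = 0 := by
      rw [hLdef, lamMin, dif_pos hH]
      exact Real.iInf_of_isEmpty _
    rw [this, Real.sqrt_zero]
  · -- n ≠ 0 : construct an element of S with value ≤ √L
    obtain ⟨i₀, hi₀⟩ := aux_lamMin_attained hn hH
    set v := hH.eigenvectorBasis i₀ with hv
    set x : Fin n → ℂ := ⇑v with hxdef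
    have hxe : (WithLp.equiv 2 (Fin n → ℂ)).symm x = v := rfl
    have hv1 : ‖v‖ = 1 := hH.eigenvectorBasis.orthonormal.1 i₀
    have hxdot : star x ⬝ᵥ x = 1 := by
      rw [aux_norm_sq, hxe, hv1]; norm_num
    have hx0 : x ≠ 0 := by
      intro h
      have h2 : ‖v‖ = 0 := by rw [← hxe, h]; simp
      rw [hv1] at h2; norm_num at h2
    have heig : (-(J * J) + R * R + E * E) *ᵥ x = hH.eigenvalues i₀ • x :=
      hH.mulVec_eigenvectorBasis i₀
    have hre : (star x ⬝ᵥ (-(J * J) + R * R + E * E) *ᵥ x).re = L := by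
      rw [heig, dotProduct_smul, hxdot, hLdef, hi₀]
      simp [Complex.real_smul]
    -- the perturbations
    set DJ := -(vecMulVec (J *ᵥ x) (star x)) with hDJ
    set DR := -(vecMulVec (R *ᵥ x) (star x)) with hDR
    set DE := -(vecMulVec (E *ᵥ x) (star x)) with hDE
    have hker : ∀ A : Matrix (Fin n) (Fin n) ℂ,
        (A + -(vecMulVec (A *ᵥ x) (star x))) *ᵥ x = 0 := by
      intro A
      rw [add_mulVec, neg_mulVec, aux_vecMulVec_mulVec, hxdot, one_smul, add_neg_cancel]
    have hnJ : specNorm DJ ≤ ‖(WithLp.equiv 2 (Fin n → ℂ)).symm (J *ᵥ x)‖ := by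
      rw [hDJ, aux_specNorm_neg]
      calc specNorm (vecMulVec (J *ᵥ x) (star x))
          ≤ ‖(WithLp.equiv 2 (Fin n → ℂ)).symm (J *ᵥ x)‖ *
            ‖(WithLp.equiv 2 (Fin n → ℂ)).symm x‖ := aux_rank_one_le _ _
        _ = ‖(WithLp.equiv 2 (Fin n → ℂ)).symm (J *ᵥ x)‖ := by rw [hxe, hv1, mul_one]
    have hnR : specNorm DR ≤ ‖(WithLp.equiv 2 (Fin n → ℂ)).symm (R *ᵥ x)‖ := by
      rw [hDR, aux_specNorm_neg]
      calc specNorm (vecMulVec (R *ᵥ x) (star x))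
          ≤ ‖(WithLp.equiv 2 (Fin n → ℂ)).symm (R *ᵥ x)‖ *
            ‖(WithLp.equiv 2 (Fin n → ℂ)).symm x‖ := aux_rank_one_le _ _
        _ = ‖(WithLp.equiv 2 (Fin n → ℂ)).symm (R *ᵥ x)‖ := by rw [hxe, hv1, mul_one]
    have hnE : specNorm DE ≤ ‖(WithLp.equiv 2 (Fin n → ℂ)).symm (E *ᵥ x)‖ := by
      rw [hDE, aux_specNorm_neg]
      calc specNorm (vecMulVec (E *ᵥ x) (star x))
          ≤ ‖(WithLp.equiv 2 (Fin n → ℂ)).symm (E *ᵥ x)‖ *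
            ‖(WithLp.equiv 2 (Fin n → ℂ)).symm x‖ := aux_rank_one_le _ _
        _ = ‖(WithLp.equiv 2 (Fin n → ℂ)).symm (E *ᵥ x)‖ := by rw [hxe, hv1, mul_one]
    have hsumle : specNorm DJ ^ 2 + specNorm DR ^ 2 + specNorm DE ^ 2 ≤ L := by
      have := hray x
      rw [hre] at this
      have pJ := pow_le_pow_left₀ (aux_specNorm_nonneg DJ) hnJ 2
      have pR := pow_le_pow_left₀ (aux_specNorm_nonneg DR) hnR 2
      have pE := pow_le_pow_left₀ (aux_specNorm_nonneg DE) hnE 2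
      linarith
    set r₀ := Real.sqrt (specNorm DJ ^ 2 + specNorm DR ^ 2 + specNorm DE ^ 2) with hr₀
    have hmem : r₀ ∈ S := ⟨DJ, DR, DE, x, hx0, hker J, hker R, hker E, rfl⟩
    have hbdd : BddBelow S := ⟨0, fun r hr => by
      obtain ⟨_, _, _, _, _, _, _, _, hreq⟩ := hr
      rw [hreq]; exact Real.sqrt_nonneg _⟩
    refine le_antisymm ?_ (le_csInf ⟨r₀, hmem⟩ hlb)
    calc sInf S ≤ r₀ := csInf_le hbdd hmem
      _ ≤ Real.sqrt L := Real.sqrt_le_sqrt hsumle
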